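/- Let T be a tree on n vertices and S ⊆ V(T) with |S| = d. Form the shadow graph T_S by replacing each v ∈ S with an edge v₁v₂, joining v₁ and v₂ to all neighbors of v not in S, and for every edge vw of T with both endpoints in S adding all four edges between {v₁,v₂} and {w₁,w₂}. Then the number of proper k-colorings of T_S equals k·(k-1)^{n+d-1-deg(S)}·(k-2)^{deg(S)-int(S)}·(k-3)^{int(S)}, where deg(S) = Σ_{v∈S} deg(v) and int(S) is the number of edges of T with both endpoints in S. -/

import Mathlib

/-- The number of proper `k`-colorings of a simple graph `G`. -/
noncomputable def numColorings {V : Type} (G : SimpleGraph V) (k : ℕ) : ℕ :=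
  Nat.card {f : V → Fin k // ∀ u w, G.Adj u w → f u ≠ f w}

/-- The shadow graph `G_S`: each `v ∈ S` is replaced by an adjacent pair `v₁, v₂`, both
joined to all neighbors of `v` not in `S`, and for every edge of `G` with both endpoints
in `S` all four edges between the corresponding pairs are added. -/
def multiShadow {V : Type} (G : SimpleGraph V) (S : Finset V) :
    SimpleGraph ({u : V // u ∉ S} ⊕ ({u : V // u ∈ S} × Bool)) :=
  SimpleGraph.fromRel (fun x y =>
    match x, y with
    | Sum.inl a, Sum.inl b => G.Adj a.1 b.1
    | Sum.inl a, Sum.inr (w, _) => G.Adj a.1 w.1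
    | Sum.inr _, Sum.inl _ => False
    | Sum.inr (w, _), Sum.inr (x, _) => w = x ∨ G.Adj w.1 x.1)

/-- Sum of the degrees of the vertices in `S`. -/
noncomputable def degSum {V : Type} (G : SimpleGraph V) (S : Finset V) : ℕ :=
  ∑ v ∈ S, (G.neighborSet v).ncard

/-- The number of edges of `G` with both endpoints in `S`. -/
noncomputable def intEdges {V : Type} (G : SimpleGraph V) (S : Finset V) : ℕ :=
  {e : Sym2 V | e ∈ G.edgeSet ∧ ∀ x ∈ e, x ∈ S}.ncard

set_option linter.unusedSectionVars false
set_option maxHeartbeats 1000000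

@[simp] lemma multiShadow_adj_inl_inl {V : Type} (G : SimpleGraph V) (S : Finset V)
    (a b : {u : V // u ∉ S}) :
    (multiShadow G S).Adj (Sum.inl a) (Sum.inl b) ↔ G.Adj a.1 b.1 := by
  simp only [multiShadow, SimpleGraph.fromRel_adj]
  constructor
  · rintro ⟨hne, h | h⟩
    · exact h
    · exact h.symm
  · intro h
    exact ⟨fun he => h.ne (congrArg Subtype.val (Sum.inl.inj he)), Or.inl h⟩

@[simp] lemma multiShadow_adj_inl_inr {V : Type} (G : SimpleGraph V) (S : Finset V)
    (a : {u : V // u ∉ S}) (w : {u : V // u ∈ S}) (b : Bool) :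
    (multiShadow G S).Adj (Sum.inl a) (Sum.inr (w, b)) ↔ G.Adj a.1 w.1 := by
  simp only [multiShadow, SimpleGraph.fromRel_adj]
  constructor
  · rintro ⟨hne, h | h⟩
    · exact h
    · exact h.elim
  · intro h
    exact ⟨fun he => by simp at he, Or.inl h⟩

@[simp] lemma multiShadow_adj_inr_inl {V : Type} (G : SimpleGraph V) (S : Finset V)
    (a : {u : V // u ∉ S}) (w : {u : V // u ∈ S}) (b : Bool) :
    (multiShadow G S).Adj (Sum.inr (w, b)) (Sum.inl a) ↔ G.Adj a.1 w.1 := by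
  rw [SimpleGraph.adj_comm]; exact multiShadow_adj_inl_inr G S a w b

@[simp] lemma multiShadow_adj_inr_inr {V : Type} (G : SimpleGraph V) (S : Finset V)
    (w x : {u : V // u ∈ S}) (b c : Bool) :
    (multiShadow G S).Adj (Sum.inr (w, b)) (Sum.inr (x, c)) ↔
      (w = x ∧ b ≠ c) ∨ G.Adj w.1 x.1 := by
  simp only [multiShadow, SimpleGraph.fromRel_adj]
  constructor
  · rintro ⟨hne, h | h⟩
    · rcases h with h | h
      · exact Or.inl ⟨h, fun hbc => hne (by rw [h, hbc])⟩
      · exact Or.inr h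
    · rcases h with h | h
      · exact Or.inl ⟨h.symm, fun hbc => hne (by rw [h, hbc])⟩
      · exact Or.inr h.symm
  · rintro (⟨rfl, hbc⟩ | h)
    · exact ⟨by simp [hbc], Or.inl (Or.inl rfl)⟩
    · refine ⟨?_, Or.inl (Or.inr h)⟩
      rintro he
      rw [Sum.inr.injEq, Prod.mk.injEq] at he
      exact h.ne (congrArg Subtype.val he.1)

/-- Attach a clique on `L`, each of whose vertices is joined to all of `N`, to `G'`. -/
def attachG {α L : Type} (G' : SimpleGraph α) (N : Set α) : SimpleGraph (α ⊕ L) where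
  Adj x y := match x, y with
    | Sum.inl a, Sum.inl b => G'.Adj a b
    | Sum.inl a, Sum.inr _ => a ∈ N
    | Sum.inr _, Sum.inl a => a ∈ N
    | Sum.inr l, Sum.inr l' => l ≠ l'
  symm := by
    constructor
    rintro (a | l) (b | l') h
    · exact G'.adj_symm h
    · exact h
    · exact h
    · exact Ne.symm h
  loopless := by
    constructor
    rintro (a | l) h
    · exact G'.irrefl h
    · exact h rfl

@[simp] lemma attachG_adj_inl_inl {α L : Type} (G' : SimpleGraph α) (N : Set α) (a b : α) :
    (attachG G' N (L := L)).Adj (Sum.inl a) (Sum.inl b) ↔ G'.Adj a b := Iff.rfl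

@[simp] lemma attachG_adj_inl_inr {α L : Type} (G' : SimpleGraph α) (N : Set α) (a : α) (l : L) :
    (attachG G' N (L := L)).Adj (Sum.inl a) (Sum.inr l) ↔ a ∈ N := Iff.rfl

@[simp] lemma attachG_adj_inr_inl {α L : Type} (G' : SimpleGraph α) (N : Set α) (a : α) (l : L) :
    (attachG G' N (L := L)).Adj (Sum.inr l) (Sum.inl a) ↔ a ∈ N := Iff.rfl

@[simp] lemma attachG_adj_inr_inr {α L : Type} (G' : SimpleGraph α) (N : Set α) (l l' : L) :
    (attachG G' N (L := L)).Adj (Sum.inr l) (Sum.inr l') ↔ l ≠ l' := Iff.rfl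

/-- Colorings of `attachG` decompose as colorings of `G'` plus an embedding of `L`. -/
def extEquiv {α L : Type} (G' : SimpleGraph α) (N : Set α) (k : ℕ) :
    {f : α ⊕ L → Fin k // ∀ u w, (attachG G' N (L := L)).Adj u w → f u ≠ f w} ≃
    Σ g : {g : α → Fin k // ∀ u w, G'.Adj u w → g u ≠ g w},
      (L ↪ {c : Fin k // ∀ a ∈ N, c ≠ g.1 a}) where
  toFun f := ⟨⟨fun a => f.1 (Sum.inl a), fun u w h => f.2 _ _ ((attachG_adj_inl_inl G' N u w).mpr h)⟩,
    ⟨fun l => ⟨f.1 (Sum.inr l), fun a ha h =>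
        f.2 (Sum.inr l) (Sum.inl a) ((attachG_adj_inr_inl G' N a l).mpr ha) h⟩,
      fun l l' h => by
        by_contra hne
        exact f.2 (Sum.inr l) (Sum.inr l') ((attachG_adj_inr_inr G' N l l').mpr hne)
          (congrArg Subtype.val h)⟩⟩
  invFun p := ⟨fun x => Sum.elim p.1.1 (fun l => (p.2 l).1) x, by
    rintro (a | l) (b | l') h
    · exact p.1.2 a b h
    · exact fun he => (p.2 l').2 a h he.symm
    · exact (p.2 l).2 b h
    · exact fun he => h (p.2.injective (Subtype.ext he))⟩
  left_inv f := Subtype.ext (funext fun x => by rcases x with a | l <;> rfl)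
  right_inv p := rfl

lemma card_ext {α L : Type} [Fintype α] [Fintype L] (G' : SimpleGraph α) (N : Finset α) (k : ℕ)
    (hN : ∀ g : α → Fin k, (∀ u w, G'.Adj u w → g u ≠ g w) → Set.InjOn g N) :
    numColorings (attachG G' (N : Set α) : SimpleGraph (α ⊕ L)) k =
      numColorings G' k * (k - N.card).descFactorial (Fintype.card L) := by
  classical
  rw [numColorings, Nat.card_congr (extEquiv G' (N : Set α) k), numColorings]
  rw [Nat.card_eq_fintype_card, Fintype.card_sigma]
  have hcard : ∀ g : {g : α → Fin k // ∀ u w, G'.Adj u w → g u ≠ g w},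
      Fintype.card (L ↪ {c : Fin k // ∀ a ∈ (N : Set α), c ≠ g.1 a}) =
        (k - N.card).descFactorial (Fintype.card L) := by
    intro g
    rw [Fintype.card_embedding_eq]
    congr 1
    have e : {c : Fin k // ∀ a ∈ (N : Set α), c ≠ g.1 a} ≃ {c : Fin k // c ∉ N.image g.1} :=
      Equiv.subtypeEquivRight (fun c => by
        constructor
        · intro h hmem
          obtain ⟨a, ha, hc⟩ := Finset.mem_image.mp hmem
          exact h a ha hc.symm
        · intro h a ha hc
          exact h (Finset.mem_image.mpr ⟨a, ha, hc.symm⟩))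
    rw [Fintype.card_congr e, Fintype.card_subtype_compl, Fintype.card_fin,
      Fintype.card_coe, Finset.card_image_of_injOn (hN g.1 g.2)]
  rw [Finset.sum_congr rfl (fun g _ => hcard g), Finset.sum_const, Finset.card_univ,
    Nat.card_eq_fintype_card, smul_eq_mul]

lemma numColorings_congr {V W : Type} (G : SimpleGraph V) (H : SimpleGraph W) (e : V ≃ W)
    (h : ∀ u v, G.Adj u v ↔ H.Adj (e u) (e v)) (k : ℕ) : numColorings G k = numColorings H k := by
  rw [numColorings, numColorings]
  apply Nat.card_congr
  refine ⟨fun f => ⟨f.1 ∘ e.symm, fun u w hw => f.2 _ _ ((h _ _).mpr (by simpa using hw))⟩,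
    fun f => ⟨f.1 ∘ e, fun u w hw => f.2 _ _ ((h _ _).mp hw)⟩, fun f => ?_, fun f => ?_⟩ <;>
    exact Subtype.ext (funext fun x => by simp)

lemma exists_leaf {V : Type} [Fintype V] (T : SimpleGraph V) (hT : T.IsTree)
    (h2 : 2 ≤ Fintype.card V) : ∃ v u : V, T.Adj v u ∧ ∀ w, T.Adj v w → w = u := by
  classical
  have hdeg : ∀ v : V, 0 < T.degree v := by
    intro v
    rw [T.degree_pos_iff_exists_adj]
    obtain ⟨w, hw⟩ := Fintype.exists_ne_of_one_lt_card (by omega) v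
    obtain ⟨p⟩ := hT.isConnected.preconnected v w
    cases p with
    | nil => exact absurd rfl (Ne.symm hw)
    | cons h q => exact ⟨_, h⟩
  by_contra hcon
  push_neg at hcon
  have hdeg2 : ∀ v : V, 2 ≤ T.degree v := by
    intro v
    rcases Nat.lt_or_ge (T.degree v) 2 with h | h
    · exfalso
      interval_cases hv : T.degree v
      · have := hdeg v; omega
      · obtain ⟨u, hu⟩ := Finset.card_eq_one.mp hv
        have hadj : T.Adj v u := by
          have : u ∈ T.neighborFinset v := hu ▸ Finset.mem_singleton_self u
          simpa using this
        obtain ⟨w, hw, hwu⟩ := hcon v u hadj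
        exact hwu (by have := (T.mem_neighborFinset v w).mpr hw; rw [hu] at this; simpa using this)
    · exact h
  have hsum := T.sum_degrees_eq_twice_card_edges
  have hedge := hT.card_edgeFinset
  have : 2 * Fintype.card V ≤ ∑ v, T.degree v := by
    calc 2 * Fintype.card V = ∑ _v : V, 2 := by rw [Finset.sum_const, Finset.card_univ]; ring
    _ ≤ ∑ v, T.degree v := Finset.sum_le_sum fun v _ => hdeg2 v
  omega

lemma reachable_delete {V : Type} (T : SimpleGraph V) (v0 u0 : V)
    (huniq : ∀ w, T.Adj v0 w → w = u0) {x y : V} (p : T.Walk x y) :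
    p.IsPath → ∀ (hx : x ≠ v0) (hy : y ≠ v0),
      (T.comap (Subtype.val : {u : V // u ≠ v0} → V)).Reachable ⟨x, hx⟩ ⟨y, hy⟩ := by
  induction p with
  | nil => exact fun _ _ _ => SimpleGraph.Reachable.refl _
  | @cons a b c h q ih =>
    intro hp ha hc
    by_cases hb : b = v0
    · subst hb
      exfalso
      cases q with
      | nil => exact hc rfl
      | @cons _ z _ h2 q2 =>
        have hz : z = u0 := huniq z h2
        have hau : a = u0 := huniq a h.symm
        have hmem : a ∈ (SimpleGraph.Walk.cons h2 q2).support := by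
          rw [SimpleGraph.Walk.support_cons]
          refine List.mem_cons_of_mem _ ?_
          rw [hau, ← hz]
          exact q2.start_mem_support
        exact ((SimpleGraph.Walk.cons_isPath_iff h (SimpleGraph.Walk.cons h2 q2)).mp hp).2 hmem
    · have h1 : (T.comap (Subtype.val : {u : V // u ≠ v0} → V)).Adj ⟨a, ha⟩ ⟨b, hb⟩ := h
      exact (h1.reachable).trans (ih ((SimpleGraph.Walk.cons_isPath_iff h q).mp hp).1 hb hc)

lemma isTree_delete {V : Type} (T : SimpleGraph V) (hT : T.IsTree) (v0 u0 : V)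
    (hadj : T.Adj v0 u0) (huniq : ∀ w, T.Adj v0 w → w = u0) :
    (T.comap (Subtype.val : {u : V // u ≠ v0} → V)).IsTree := by
  constructor
  · rw [SimpleGraph.connected_iff]
    refine ⟨?_, ⟨⟨u0, fun h => hadj.ne (h ▸ rfl)⟩⟩⟩
    rintro ⟨x, hx⟩ ⟨y, hy⟩
    obtain ⟨p, hp⟩ := (hT.existsUnique_path x y).exists
    exact reachable_delete T v0 u0 huniq p hp hx hy
  · intro v c hc
    exact hT.2 _ (hc.map (f := SimpleGraph.Hom.comap Subtype.val T) Subtype.val_injective)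

section Bookkeeping
variable {V : Type} [Fintype V] [DecidableEq V] (T : SimpleGraph V) (v0 u0 : V)

lemma leaf_neighborSet (hadj : T.Adj v0 u0) (huniq : ∀ w, T.Adj v0 w → w = u0) :
    T.neighborSet v0 = {u0} := by
  ext w
  simp only [SimpleGraph.mem_neighborSet, Set.mem_singleton_iff]
  exact ⟨fun h => huniq w h, fun h => h ▸ hadj⟩

lemma adj_leaf_iff (hadj : T.Adj v0 u0) (huniq : ∀ w, T.Adj v0 w → w = u0) (w : V) :
    T.Adj w v0 ↔ w = u0 :=
  ⟨fun h => huniq w h.symm, fun h => h ▸ hadj.symm⟩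

lemma neighbor_ncard_delete (hadj : T.Adj v0 u0) (huniq : ∀ w, T.Adj v0 w → w = u0)
    (v : {u : V // u ≠ v0}) :
    ((T.comap (Subtype.val : {u : V // u ≠ v0} → V)).neighborSet v).ncard =
      (T.neighborSet v.1).ncard - (if v.1 = u0 then 1 else 0) := by
  have h1 : Subtype.val '' ((T.comap (Subtype.val : {u : V // u ≠ v0} → V)).neighborSet v) =
      T.neighborSet v.1 \ {v0} := by
    ext w
    constructor
    · rintro ⟨u, hu, rfl⟩
      exact ⟨hu, u.2⟩
    · rintro ⟨hw, hwv0⟩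
      exact ⟨⟨w, hwv0⟩, hw, rfl⟩
  have h2 := Set.ncard_image_of_injective
    ((T.comap (Subtype.val : {u : V // u ≠ v0} → V)).neighborSet v) Subtype.val_injective
  rw [h1] at h2
  rw [← h2]
  by_cases hA : T.Adj v.1 v0
  · rw [if_pos ((adj_leaf_iff T v0 u0 hadj huniq v.1).mp hA), Set.ncard_diff_singleton_of_mem (show v0 ∈ T.neighborSet v.1 from hA)]
  · rw [if_neg (fun h => hA ((adj_leaf_iff T v0 u0 hadj huniq v.1).mpr h)),
      Set.diff_singleton_eq_self (show v0 ∉ T.neighborSet v.1 from hA), Nat.sub_zero]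

lemma degSum_delete (hadj : T.Adj v0 u0) (huniq : ∀ w, T.Adj v0 w → w = u0) (S : Finset V) :
    degSum T S = degSum (T.comap (Subtype.val : {u : V // u ≠ v0} → V)) (S.subtype (· ≠ v0)) +
      (if v0 ∈ S then 1 else 0) + (if u0 ∈ S then 1 else 0) := by
  have hA : ∑ w ∈ S.erase v0, (T.neighborSet w).ncard =
      degSum T S - (if v0 ∈ S then 1 else 0) ∧
      (if v0 ∈ S then 1 else 0) ≤ degSum T S := by
    by_cases hv : v0 ∈ S
    · rw [if_pos hv, degSum, ← Finset.add_sum_erase _ _ hv,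
        leaf_neighborSet T v0 u0 hadj huniq, Set.ncard_singleton]
      omega
    · rw [if_neg hv, Finset.erase_eq_of_notMem hv, degSum]
      omega
  have hB : degSum (T.comap (Subtype.val : {u : V // u ≠ v0} → V)) (S.subtype (· ≠ v0)) =
      ∑ w ∈ S.erase v0, ((T.neighborSet w).ncard - (if w = u0 then 1 else 0)) := by
    rw [degSum]
    rw [Finset.sum_congr rfl (fun v _ => neighbor_ncard_delete T v0 u0 hadj huniq v)]
    have hstep := Finset.sum_subtype_eq_sum_filter (s := S)
      (fun w => (T.neighborSet w).ncard - if w = u0 then 1 else 0) (p := fun x => x ≠ v0)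
    rw [hstep, Finset.filter_ne']
  have hu0v0 : u0 ≠ v0 := fun h => hadj.ne (h ▸ rfl)
  have hC : ∑ w ∈ S.erase v0, ((T.neighborSet w).ncard - (if w = u0 then 1 else 0)) =
      (∑ w ∈ S.erase v0, (T.neighborSet w).ncard) - (if u0 ∈ S then 1 else 0) ∧
      (if u0 ∈ S then 1 else 0) ≤ ∑ w ∈ S.erase v0, (T.neighborSet w).ncard := by
    by_cases hu : u0 ∈ S
    · have humem : u0 ∈ S.erase v0 := Finset.mem_erase.mpr ⟨hu0v0, hu⟩
      rw [if_pos hu, ← Finset.add_sum_erase _ _ humem,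
        ← Finset.add_sum_erase _ (fun w => (T.neighborSet w).ncard) humem]
      have h1 : 1 ≤ (T.neighborSet u0).ncard := by
        have : v0 ∈ T.neighborSet u0 := hadj.symm
        have := (Set.ncard_pos (Set.toFinite _)).mpr ⟨v0, this⟩
        omega
      rw [if_pos rfl]
      have : ∀ w ∈ (S.erase v0).erase u0,
          (T.neighborSet w).ncard - (if w = u0 then 1 else 0) = (T.neighborSet w).ncard := by
        intro w hw
        rw [if_neg (Finset.ne_of_mem_erase hw), Nat.sub_zero]
      rw [Finset.sum_congr rfl this]
      omega
    · have : ∀ w ∈ S.erase v0,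
          (T.neighborSet w).ncard - (if w = u0 then 1 else 0) = (T.neighborSet w).ncard := by
        intro w hw
        rw [if_neg (fun h => hu (by rw [← h]; exact Finset.mem_of_mem_erase hw)), Nat.sub_zero]
      rw [Finset.sum_congr rfl this, if_neg hu]
      omega
  omega

end Bookkeeping

section Bookkeeping2
variable {V : Type} [Fintype V] [DecidableEq V] (T : SimpleGraph V) (v0 u0 : V)

lemma edge_at_leaf (hadj : T.Adj v0 u0) (huniq : ∀ w, T.Adj v0 w → w = u0)
    (e : Sym2 V) (he : e ∈ T.edgeSet) (hv : v0 ∈ e) : e = s(v0, u0) := by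
  induction e using Sym2.ind with
  | _ a b =>
    rw [SimpleGraph.mem_edgeSet] at he
    rw [Sym2.mem_iff] at hv
    rcases hv with rfl | rfl
    · rw [huniq b he]
    · rw [huniq a he.symm, Sym2.eq_swap]

lemma intEdges_delete (hadj : T.Adj v0 u0) (huniq : ∀ w, T.Adj v0 w → w = u0) (S : Finset V) :
    intEdges T S =
      intEdges (T.comap (Subtype.val : {u : V // u ≠ v0} → V)) (S.subtype (· ≠ v0)) +
      (if v0 ∈ S ∧ u0 ∈ S then 1 else 0) := by
  classical
  have himg : Sym2.map (Subtype.val : {u : V // u ≠ v0} → V) ''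
      {e : Sym2 {u : V // u ≠ v0} |
        e ∈ (T.comap (Subtype.val : {u : V // u ≠ v0} → V)).edgeSet ∧
          ∀ x ∈ e, x ∈ S.subtype (· ≠ v0)} =
      {e : Sym2 V | (e ∈ T.edgeSet ∧ ∀ x ∈ e, x ∈ S) ∧ v0 ∉ e} := by
    ext e
    constructor
    · rintro ⟨e', ⟨he1, he2⟩, rfl⟩
      induction e' using Sym2.ind with
      | _ a b =>
        rw [Sym2.map_pair_eq]
        refine ⟨⟨T.mem_edgeSet.mpr he1, ?_⟩, ?_⟩
        · intro x hx
          rcases Sym2.mem_iff.mp hx with rfl | rfl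
          · exact Finset.mem_subtype.mp (he2 a (Sym2.mem_mk_left a b))
          · exact Finset.mem_subtype.mp (he2 b (Sym2.mem_mk_right a b))
        · intro hv
          rcases Sym2.mem_iff.mp hv with h | h
          · exact a.2 h.symm
          · exact b.2 h.symm
    · rintro ⟨⟨he1, he2⟩, hv⟩
      induction e using Sym2.ind with
      | _ a b =>
        have ha : a ≠ v0 := fun h => hv (by rw [← h]; exact Sym2.mem_mk_left a b)
        have hb : b ≠ v0 := fun h => hv (by rw [← h]; exact Sym2.mem_mk_right a b)
        refine ⟨s(⟨a, ha⟩, ⟨b, hb⟩), ⟨((T.comap (Subtype.val : {u : V // u ≠ v0} → V)).mem_edgeSet).mpr (T.mem_edgeSet.mp he1), ?_⟩, Sym2.map_pair_eq _ _ _⟩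
        intro x hx
        rcases Sym2.mem_iff.mp hx with rfl | rfl
        · exact Finset.mem_subtype.mpr (he2 a (Sym2.mem_mk_left a b))
        · exact Finset.mem_subtype.mpr (he2 b (Sym2.mem_mk_right a b))
  have hinj : Function.Injective (Sym2.map (Subtype.val : {u : V // u ≠ v0} → V)) :=
    Sym2.map.injective Subtype.val_injective
  have hcard : intEdges (T.comap (Subtype.val : {u : V // u ≠ v0} → V)) (S.subtype (· ≠ v0)) =
      {e : Sym2 V | (e ∈ T.edgeSet ∧ ∀ x ∈ e, x ∈ S) ∧ v0 ∉ e}.ncard := by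
    rw [intEdges, ← himg, Set.ncard_image_of_injective _ hinj]
  by_cases hc : v0 ∈ S ∧ u0 ∈ S
  · have hA : {e : Sym2 V | e ∈ T.edgeSet ∧ ∀ x ∈ e, x ∈ S} =
        insert s(v0, u0) {e : Sym2 V | (e ∈ T.edgeSet ∧ ∀ x ∈ e, x ∈ S) ∧ v0 ∉ e} := by
      ext e
      constructor
      · intro he
        by_cases hv : v0 ∈ e
        · exact Set.mem_insert_iff.mpr (Or.inl (edge_at_leaf T v0 u0 hadj huniq e he.1 hv))
        · exact Set.mem_insert_iff.mpr (Or.inr ⟨he, hv⟩)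
      · intro h
        rcases Set.mem_insert_iff.mp h with rfl | ⟨he, _⟩
        · refine ⟨T.mem_edgeSet.mpr hadj, ?_⟩
          intro x hx
          rcases Sym2.mem_iff.mp hx with rfl | rfl
          · exact hc.1
          · exact hc.2
        · exact he
    rw [intEdges, hA,
      Set.ncard_insert_of_notMem (fun h => h.2 (Sym2.mem_mk_left _ _)) (Set.toFinite _),
      hcard, if_pos hc]
  · have hA : {e : Sym2 V | (e ∈ T.edgeSet ∧ ∀ x ∈ e, x ∈ S) ∧ v0 ∉ e} =
        {e : Sym2 V | e ∈ T.edgeSet ∧ ∀ x ∈ e, x ∈ S} := by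
      ext e
      constructor
      · rintro ⟨he, _⟩
        exact he
      · intro he
        refine ⟨he, fun hv => hc ?_⟩
        have hE := edge_at_leaf T v0 u0 hadj huniq e he.1 hv
        subst hE
        exact ⟨he.2 v0 (Sym2.mem_mk_left _ _), he.2 u0 (Sym2.mem_mk_right _ _)⟩
    rw [intEdges, ← hA, ← hcard, if_neg hc, Nat.add_zero]

lemma card_subtype_delete (S : Finset V) :
    (S.subtype (· ≠ v0)).card + (if v0 ∈ S then 1 else 0) = S.card := by
  rw [Finset.card_subtype, Finset.filter_ne']
  by_cases hv : v0 ∈ S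
  · rw [if_pos hv, Finset.card_erase_of_mem hv]
    have := Finset.card_pos.mpr ⟨v0, hv⟩
    omega
  · rw [if_neg hv, Finset.erase_eq_of_notMem hv, Nat.add_zero]

lemma card_ne_vertex : Fintype.card {u : V // u ≠ v0} = Fintype.card V - 1 := by
  classical
  rw [show Fintype.card {u : V // u ≠ v0} = Fintype.card {u : V // ¬u = v0} from rfl,
    Fintype.card_subtype_compl, Fintype.card_subtype_eq]

end Bookkeeping2

/-- The underlying vertex of a shadow-graph vertex. -/
def svert {A : Type} {S : Finset A} : ({u : A // u ∉ S} ⊕ ({u : A // u ∈ S} × Bool)) → A :=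
  Sum.elim (fun a => a.1) (fun p => p.1.1)

lemma svert_fiber_card {A : Type} [Fintype A] [DecidableEq A] (S : Finset A) (u : A) :
    (Finset.univ.filter
      (fun z : {u : A // u ∉ S} ⊕ ({u : A // u ∈ S} × Bool) => svert z = u)).card =
      if u ∈ S then 2 else 1 := by
  by_cases hu : u ∈ S
  · rw [if_pos hu]
    have he : Finset.univ.filter
        (fun z : {u : A // u ∉ S} ⊕ ({u : A // u ∈ S} × Bool) => svert z = u) =
        {Sum.inr (⟨u, hu⟩, true), Sum.inr (⟨u, hu⟩, false)} := by
      ext z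
      rcases z with a | ⟨w, b⟩
      · simp only [Finset.mem_filter, Finset.mem_univ, true_and]
        simp only [Finset.mem_filter, Finset.mem_univ, true_and, svert, Sum.elim_inl,
          Finset.mem_insert, Finset.mem_singleton]
        constructor
        · intro h
          exact absurd (h ▸ hu) (h ▸ a.2)
        · rintro (h | h) <;> exact absurd h (by simp)
      · simp only [Finset.mem_filter, Finset.mem_univ, true_and]
        simp only [Finset.mem_filter, Finset.mem_univ, true_and, svert, Sum.elim_inr,
          Finset.mem_insert, Finset.mem_singleton, Sum.inr.injEq, Prod.mk.injEq]
        constructor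
        · intro h
          cases b
          · exact Or.inr ⟨Subtype.ext h, rfl⟩
          · exact Or.inl ⟨Subtype.ext h, rfl⟩
        · rintro (⟨h, _⟩ | ⟨h, _⟩) <;> exact congrArg Subtype.val h
    rw [he, Finset.card_insert_of_notMem (by simp), Finset.card_singleton]
  · rw [if_neg hu]
    have he : Finset.univ.filter
        (fun z : {u : A // u ∉ S} ⊕ ({u : A // u ∈ S} × Bool) => svert z = u) =
        {Sum.inl ⟨u, hu⟩} := by
      ext z
      rcases z with a | ⟨w, b⟩
      · simp only [Finset.mem_filter, Finset.mem_univ, true_and]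
        simp only [Finset.mem_filter, Finset.mem_univ, true_and, svert, Sum.elim_inl,
          Finset.mem_singleton, Sum.inl.injEq]
        exact ⟨fun h => Subtype.ext h, fun h => congrArg Subtype.val h⟩
      · simp only [Finset.mem_filter, Finset.mem_univ, true_and]
        simp only [Finset.mem_filter, Finset.mem_univ, true_and, svert, Sum.elim_inr,
          Finset.mem_singleton]
        constructor
        · intro h
          exact absurd (h ▸ w.2) (h ▸ hu)
        · intro h
          exact absurd h (by simp)
    rw [he, Finset.card_singleton]

lemma injOn_fiber {A : Type} [Fintype A] [DecidableEq A] (G : SimpleGraph A) (S : Finset A)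
    (u : A) (k : ℕ) (g : ({u : A // u ∉ S} ⊕ ({u : A // u ∈ S} × Bool)) → Fin k)
    (hg : ∀ x y, (multiShadow G S).Adj x y → g x ≠ g y) :
    Set.InjOn g ↑(Finset.univ.filter
      (fun z : {u : A // u ∉ S} ⊕ ({u : A // u ∈ S} × Bool) => svert z = u)) := by
  intro z1 h1 z2 h2 heq
  simp only [Finset.coe_filter, Finset.mem_univ, true_and, Set.mem_setOf_eq] at h1 h2
  by_contra hne
  rcases z1 with a1 | ⟨w1, b1⟩ <;> rcases z2 with a2 | ⟨w2, b2⟩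
  · exact hne (congrArg Sum.inl (Subtype.ext (h1.trans h2.symm)))
  · simp only [svert, Sum.elim_inl, Sum.elim_inr] at h1 h2
    exact a1.2 (h1 ▸ (h2 ▸ w2.2))
  · simp only [svert, Sum.elim_inl, Sum.elim_inr] at h1 h2
    exact a2.2 (h2 ▸ (h1 ▸ w1.2))
  · simp only [svert, Sum.elim_inr] at h1 h2
    have hw : w1 = w2 := Subtype.ext (h1.trans h2.symm)
    have hb : b1 ≠ b2 := by
      intro hb
      exact hne (by rw [hw, hb])
    exact hg _ _ ((multiShadow_adj_inr_inr G S w1 w2 b1 b2).mpr (Or.inl ⟨hw, hb⟩)) heq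

/-- Vertex equivalence when the removed leaf is not in `S`. -/
def eqvOut {V : Type} [DecidableEq V] (S : Finset V) (v0 : V) (hv0 : v0 ∉ S) :
    ({u : V // u ∉ S} ⊕ ({u : V // u ∈ S} × Bool)) ≃
      (({u : {u : V // u ≠ v0} // u ∉ S.subtype (· ≠ v0)} ⊕
        ({u : {u : V // u ≠ v0} // u ∈ S.subtype (· ≠ v0)} × Bool)) ⊕ Unit) where
  toFun x := match x with
    | Sum.inl a => if h : a.1 = v0 then Sum.inr () else
        Sum.inl (Sum.inl ⟨⟨a.1, h⟩, fun hm => a.2 (by simpa using hm)⟩)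
    | Sum.inr (w, b) =>
        Sum.inl (Sum.inr (⟨⟨w.1, fun h => hv0 (h ▸ w.2)⟩, Finset.mem_subtype.mpr w.2⟩, b))
  invFun x := match x with
    | Sum.inl (Sum.inl a) => Sum.inl ⟨a.1.1, fun hm => a.2 (Finset.mem_subtype.mpr hm)⟩
    | Sum.inl (Sum.inr (w, b)) => Sum.inr (⟨w.1.1, Finset.mem_subtype.mp w.2⟩, b)
    | Sum.inr _ => Sum.inl ⟨v0, hv0⟩
  left_inv := by
    rintro (a | ⟨w, b⟩)
    · by_cases h : a.1 = v0
      · simp only [dif_pos h]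
        exact congrArg Sum.inl (Subtype.ext h.symm)
      · simp only [dif_neg h]
    · rfl
  right_inv := by
    rintro ((a | ⟨w, b⟩) | u)
    · simp only [dif_neg (show a.1.1 ≠ v0 from a.1.2)]
    · rfl
    · exact dif_pos rfl

/-- Vertex equivalence when the removed leaf is in `S`. -/
def eqvIn {V : Type} [DecidableEq V] (S : Finset V) (v0 : V) (hv0 : v0 ∈ S) :
    ({u : V // u ∉ S} ⊕ ({u : V // u ∈ S} × Bool)) ≃
      (({u : {u : V // u ≠ v0} // u ∉ S.subtype (· ≠ v0)} ⊕
        ({u : {u : V // u ≠ v0} // u ∈ S.subtype (· ≠ v0)} × Bool)) ⊕ Bool) where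
  toFun x := match x with
    | Sum.inl a => Sum.inl (Sum.inl ⟨⟨a.1, fun h => a.2 (h ▸ hv0)⟩,
        fun hm => a.2 (by simpa using hm)⟩)
    | Sum.inr (w, b) => if h : w.1 = v0 then Sum.inr b else
        Sum.inl (Sum.inr (⟨⟨w.1, h⟩, Finset.mem_subtype.mpr w.2⟩, b))
  invFun x := match x with
    | Sum.inl (Sum.inl a) => Sum.inl ⟨a.1.1, fun hm => a.2 (Finset.mem_subtype.mpr hm)⟩
    | Sum.inl (Sum.inr (w, b)) => Sum.inr (⟨w.1.1, Finset.mem_subtype.mp w.2⟩, b)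
    | Sum.inr b => Sum.inr (⟨v0, hv0⟩, b)
  left_inv := by
    rintro (a | ⟨w, b⟩)
    · rfl
    · by_cases h : w.1 = v0
      · simp only [dif_pos h]
        exact congrArg Sum.inr (Prod.ext (Subtype.ext h.symm) rfl)
      · simp only [dif_neg h]
  right_inv := by
    rintro ((a | ⟨w, b⟩) | b)
    · rfl
    · simp only [dif_neg (show w.1.1 ≠ v0 from w.1.2)]
    · exact dif_pos rfl

lemma adj_eqvOut {V : Type} [Fintype V] [DecidableEq V] (T : SimpleGraph V) (v0 u0 : V)
    (S : Finset V) (hadj : T.Adj v0 u0) (huniq : ∀ w, T.Adj v0 w → w = u0) (hv0 : v0 ∉ S)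
    (hu0v0 : u0 ≠ v0) (x y : {u : V // u ∉ S} ⊕ ({u : V // u ∈ S} × Bool)) :
    (multiShadow T S).Adj x y ↔
      (attachG (L := Unit)
        (multiShadow (T.comap (Subtype.val : {u : V // u ≠ v0} → V)) (S.subtype (· ≠ v0)))
        (↑(Finset.univ.filter
          (fun z : {u : {u : V // u ≠ v0} // u ∉ S.subtype (· ≠ v0)} ⊕
              ({u : {u : V // u ≠ v0} // u ∈ S.subtype (· ≠ v0)} × Bool) =>
            svert z = (⟨u0, hu0v0⟩ : {u : V // u ≠ v0}))) : Set _)).Adj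
        (eqvOut S v0 hv0 x) (eqvOut S v0 hv0 y) := by
  have hvadj : ∀ w, T.Adj v0 w ↔ w = u0 := fun w => ⟨huniq w, fun h => h ▸ hadj⟩
  have hvadj' : ∀ w, T.Adj w v0 ↔ w = u0 := fun w => by rw [SimpleGraph.adj_comm]; exact hvadj w
  rcases x with ⟨a1, ha⟩ | ⟨w, b⟩ <;> rcases y with ⟨c1, hc⟩ | ⟨z, d⟩
  · by_cases h1 : a1 = v0 <;> by_cases h2 : c1 = v0
    · subst h1; subst h2
      simp [eqvOut, svert]
    · subst h1
      simp only [eqvOut, Equiv.coe_fn_mk, dif_pos rfl, dif_neg h2]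
      simp [svert, hvadj, hvadj', Subtype.ext_iff]
    · subst h2
      simp only [eqvOut, Equiv.coe_fn_mk, dif_pos rfl, dif_neg h1]
      simp [svert, hvadj, hvadj', Subtype.ext_iff]
    · simp only [eqvOut, Equiv.coe_fn_mk, dif_neg h1, dif_neg h2]
      simp [svert]
  · by_cases h1 : a1 = v0
    · subst h1
      simp only [eqvOut, Equiv.coe_fn_mk, dif_pos rfl]
      simp [svert, hvadj, hvadj', Subtype.ext_iff]
    · simp only [eqvOut, Equiv.coe_fn_mk, dif_neg h1]
      simp [svert]
  · by_cases h2 : c1 = v0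
    · subst h2
      simp only [eqvOut, Equiv.coe_fn_mk, dif_pos rfl]
      simp [svert, hvadj, hvadj', Subtype.ext_iff]
    · simp only [eqvOut, Equiv.coe_fn_mk, dif_neg h2]
      simp [svert]
  · simp only [eqvOut, Equiv.coe_fn_mk]
    simp [svert]

lemma adj_eqvIn {V : Type} [Fintype V] [DecidableEq V] (T : SimpleGraph V) (v0 u0 : V)
    (S : Finset V) (hadj : T.Adj v0 u0) (huniq : ∀ w, T.Adj v0 w → w = u0) (hv0 : v0 ∈ S)
    (hu0v0 : u0 ≠ v0) (x y : {u : V // u ∉ S} ⊕ ({u : V // u ∈ S} × Bool)) :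
    (multiShadow T S).Adj x y ↔
      (attachG (L := Bool)
        (multiShadow (T.comap (Subtype.val : {u : V // u ≠ v0} → V)) (S.subtype (· ≠ v0)))
        (↑(Finset.univ.filter
          (fun z : {u : {u : V // u ≠ v0} // u ∉ S.subtype (· ≠ v0)} ⊕
              ({u : {u : V // u ≠ v0} // u ∈ S.subtype (· ≠ v0)} × Bool) =>
            svert z = (⟨u0, hu0v0⟩ : {u : V // u ≠ v0}))) : Set _)).Adj
        (eqvIn S v0 hv0 x) (eqvIn S v0 hv0 y) := by
  have hvadj : ∀ w, T.Adj v0 w ↔ w = u0 := fun w => ⟨huniq w, fun h => h ▸ hadj⟩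
  have hvadj' : ∀ w, T.Adj w v0 ↔ w = u0 := fun w => by rw [SimpleGraph.adj_comm]; exact hvadj w
  rcases x with ⟨a1, ha⟩ | ⟨⟨w1, hw⟩, b⟩ <;> rcases y with ⟨c1, hc⟩ | ⟨⟨z1, hz⟩, d⟩
  · simp only [eqvIn, Equiv.coe_fn_mk]
    simp [svert]
  · by_cases h2 : z1 = v0
    · subst h2
      simp only [eqvIn, Equiv.coe_fn_mk, dif_pos rfl]
      simp [svert, hvadj, hvadj', Subtype.ext_iff]
    · simp only [eqvIn, Equiv.coe_fn_mk, dif_neg h2]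
      simp [svert]
  · by_cases h1 : w1 = v0
    · subst h1
      simp only [eqvIn, Equiv.coe_fn_mk, dif_pos rfl]
      simp [svert, hvadj, hvadj', Subtype.ext_iff]
    · simp only [eqvIn, Equiv.coe_fn_mk, dif_neg h1]
      simp [svert]
  · by_cases h1 : w1 = v0 <;> by_cases h2 : z1 = v0
    · subst h1; subst h2
      simp only [eqvIn, Equiv.coe_fn_mk, dif_pos rfl]
      simp [svert, Subtype.ext_iff]
    · subst h1
      simp only [eqvIn, Equiv.coe_fn_mk, dif_pos rfl, dif_neg h2]
      simp [svert, hvadj, hvadj', Subtype.ext_iff, h2, Ne.symm h2]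
    · subst h2
      simp only [eqvIn, Equiv.coe_fn_mk, dif_pos rfl, dif_neg h1]
      simp [svert, hvadj, hvadj', Subtype.ext_iff, h1, Ne.symm h1]
    · simp only [eqvIn, Equiv.coe_fn_mk, dif_neg h1, dif_neg h2]
      simp [svert, Subtype.ext_iff]

lemma step_notMem {V : Type} [Fintype V] [DecidableEq V] (T : SimpleGraph V) (v0 u0 : V)
    (S : Finset V) (hadj : T.Adj v0 u0) (huniq : ∀ w, T.Adj v0 w → w = u0) (hv0 : v0 ∉ S)
    (k : ℕ) :
    numColorings (multiShadow T S) k =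
      numColorings (multiShadow (T.comap (Subtype.val : {u : V // u ≠ v0} → V))
        (S.subtype (· ≠ v0))) k * (k - (if u0 ∈ S then 2 else 1)) := by
  classical
  have hu0v0 : u0 ≠ v0 := fun h => T.irrefl (h ▸ hadj)
  rw [numColorings_congr (multiShadow T S) _ (eqvOut S v0 hv0)
      (adj_eqvOut T v0 u0 S hadj huniq hv0 hu0v0) k,
    card_ext (L := Unit) _ _ k (fun g hg => injOn_fiber _ _ _ k g hg),
    svert_fiber_card]
  by_cases hu : u0 ∈ S <;>
    simp [Finset.mem_subtype, hu, Nat.descFactorial]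

lemma step_mem {V : Type} [Fintype V] [DecidableEq V] (T : SimpleGraph V) (v0 u0 : V)
    (S : Finset V) (hadj : T.Adj v0 u0) (huniq : ∀ w, T.Adj v0 w → w = u0) (hv0 : v0 ∈ S)
    (k : ℕ) :
    numColorings (multiShadow T S) k =
      numColorings (multiShadow (T.comap (Subtype.val : {u : V // u ≠ v0} → V))
        (S.subtype (· ≠ v0))) k *
        ((k - (if u0 ∈ S then 2 else 1) - 1) * (k - (if u0 ∈ S then 2 else 1))) := by
  classical
  have hu0v0 : u0 ≠ v0 := fun h => T.irrefl (h ▸ hadj)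
  rw [numColorings_congr (multiShadow T S) _ (eqvIn S v0 hv0)
      (adj_eqvIn T v0 u0 S hadj huniq hv0 hu0v0) k,
    card_ext (L := Bool) _ _ k (fun g hg => injOn_fiber _ _ _ k g hg),
    svert_fiber_card]
  by_cases hu : u0 ∈ S <;>
    simp [Finset.mem_subtype, hu, Nat.descFactorial]

theorem main_aux : ∀ (n : ℕ) (V : Type) (_instV : Fintype V) (T : SimpleGraph V),
    T.IsTree → Fintype.card V = n → ∀ (S : Finset V) (k : ℕ),
    (numColorings (multiShadow T S) k =
      k * (k - 1) ^ (n + S.card - 1 - degSum T S) *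
        (k - 2) ^ (degSum T S - intEdges T S) * (k - 3) ^ (intEdges T S)) ∧
    2 * intEdges T S ≤ degSum T S ∧
    degSum T S ≤ (n - 1) + intEdges T S ∧
    intEdges T S ≤ S.card - 1 := by
  intro n
  induction n using Nat.strong_induction_on with
  | _ n IH =>
  intro V instV T hT hn S k
  letI : DecidableEq V := Classical.decEq V
  have hpos : 1 ≤ n := hn ▸ Fintype.card_pos_iff.mpr hT.isConnected.nonempty
  by_cases hn1 : n = 1
  · -- base case
    subst hn1
    obtain ⟨v, hv⟩ := Fintype.card_eq_one_iff.mp hn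
    have hnoadj : ∀ a b : V, ¬T.Adj a b := fun a b h => h.ne (by rw [hv a, hv b])
    have hdeg : degSum T S = 0 := Finset.sum_eq_zero (fun w _ => by
      rw [show T.neighborSet w = ∅ from
        Set.eq_empty_iff_forall_notMem.mpr (fun z hz => hnoadj w z hz), Set.ncard_empty])
    have hint : intEdges T S = 0 := by
      have hempty : {e : Sym2 V | e ∈ T.edgeSet ∧ ∀ x ∈ e, x ∈ S} = ∅ :=
        Set.eq_empty_iff_forall_notMem.mpr (fun e he => by
          induction e using Sym2.ind with
          | _ a b => exact hnoadj a b (T.mem_edgeSet.mp he.1))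
      rw [intEdges, hempty, Set.ncard_empty]
    rw [hdeg, hint]
    by_cases hS : S = ∅
    · subst hS
      have hNoAdjShadow : ∀ x y, ¬(multiShadow T (∅ : Finset V)).Adj x y := by
        rintro (a | ⟨w, b⟩) (c | ⟨z, d⟩) h
        · exact hnoadj _ _ ((multiShadow_adj_inl_inl T ∅ a c).mp h)
        · exact Finset.notMem_empty _ z.2
        · exact Finset.notMem_empty _ w.2
        · exact Finset.notMem_empty _ w.2
      have hcount : numColorings (multiShadow T (∅ : Finset V)) k = k := by
        rw [numColorings, Nat.card_congr (Equiv.subtypeUnivEquiv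
          (fun f => fun u w h => absurd h (hNoAdjShadow u w))),
          Nat.card_eq_fintype_card, Fintype.card_fun, Fintype.card_fin]
        have hc1 : Fintype.card ({u : V // u ∉ (∅ : Finset V)} ⊕
            ({u : V // u ∈ (∅ : Finset V)} × Bool)) = 1 := by
          rw [Fintype.card_sum, Fintype.card_prod]
          simp [Fintype.card_subtype, Finset.filter_true_of_mem, hn]
        rw [hc1, pow_one]
      refine ⟨?_, by omega, by omega, by omega⟩
      rw [hcount]
      simp
    · -- S = {v}
      obtain ⟨w0, hw0⟩ := Finset.nonempty_iff_ne_empty.mpr hS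
      have hSv : S = {v} := by
        apply Finset.eq_singleton_iff_unique_mem.mpr
        exact ⟨(hv w0) ▸ hw0, fun x _ => hv x⟩
      have hvS : v ∈ S := hSv ▸ Finset.mem_singleton_self v
      have hcard1 : S.card = 1 := by rw [hSv, Finset.card_singleton]
      have hE : {f : ({u : V // u ∉ S} ⊕ ({u : V // u ∈ S} × Bool)) → Fin k //
          ∀ u w, (multiShadow T S).Adj u w → f u ≠ f w} ≃ (Bool ↪ Fin k) := by
        refine ⟨fun f => ⟨fun b => f.1 (Sum.inr (⟨v, hvS⟩, b)), fun b b' h => ?_⟩,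
          fun e => ⟨Sum.elim (fun a => absurd ((hv a.1) ▸ hvS) a.2) (fun p => e p.2), ?_⟩,
          fun f => ?_, fun e => ?_⟩
        · by_contra hne
          exact f.2 _ _ ((multiShadow_adj_inr_inr T S ⟨v, hvS⟩ ⟨v, hvS⟩ b b').mpr
            (Or.inl ⟨rfl, hne⟩)) h
        · rintro (a | ⟨w, b⟩) (c | ⟨z, d⟩) h
          · exact absurd ((hv a.1) ▸ hvS) a.2
          · exact absurd ((hv a.1) ▸ hvS) a.2
          · exact absurd ((hv c.1) ▸ hvS) c.2
          · rcases (multiShadow_adj_inr_inr T S w z b d).mp h with ⟨hwz, hbd⟩ | hTa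
            · simp only [Sum.elim_inr]
              exact fun he => hbd (e.injective he)
            · exact absurd hTa (hnoadj _ _)
        · apply Subtype.ext
          funext x
          rcases x with a | ⟨w, b⟩
          · exact absurd ((hv a.1) ▸ hvS) a.2
          · simp only [Sum.elim_inr]
            have hwv : w = ⟨v, hvS⟩ := Subtype.ext (hv w.1)
            rw [hwv]
            rfl
        · rfl
      have hcount : numColorings (multiShadow T S) k = (k - 1) * k := by
        rw [numColorings, Nat.card_congr hE, Nat.card_eq_fintype_card,
          Fintype.card_embedding_eq, Fintype.card_bool, Fintype.card_fin]
        simp [Nat.descFactorial]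
      refine ⟨?_, by omega, by omega, by omega⟩
      rw [hcount, hcard1]
      simp only [Nat.sub_zero, Nat.pow_zero]
      have h11 : 1 + 1 - 1 - 0 = 1 := by omega
      rw [h11, pow_one]
      ring
  · -- inductive step
    have hn2 : 2 ≤ n := by omega
    obtain ⟨v0, u0, hadj, huniq⟩ := exists_leaf T hT (by omega)
    have hu0v0 : u0 ≠ v0 := fun h => T.irrefl (h ▸ hadj)
    have hT' := isTree_delete T hT v0 u0 hadj huniq
    have hcard' : Fintype.card {u : V // u ≠ v0} = n - 1 := by
      rw [card_ne_vertex, hn]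
    obtain ⟨hF', h2', h3', h4'⟩ := IH (n - 1) (by omega) {u : V // u ≠ v0} _
      (T.comap (Subtype.val : {u : V // u ≠ v0} → V)) hT' hcard' (S.subtype (· ≠ v0)) k
    have hdegEq := degSum_delete T v0 u0 hadj huniq S
    have hintEq := intEdges_delete T v0 u0 hadj huniq S
    have hcardEq := card_subtype_delete (v0 := v0) S
    set T2 := T.comap (Subtype.val : {u : V // u ≠ v0} → V) with hT2def
    set S2 := S.subtype (· ≠ v0) with hS2def
    by_cases hv0S : v0 ∈ S <;> by_cases hu0S : u0 ∈ S
    · -- v0 ∈ S, u0 ∈ S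
      simp only [if_pos hv0S, if_pos hu0S,
        if_pos (show v0 ∈ S ∧ u0 ∈ S from ⟨hv0S, hu0S⟩)] at hdegEq hintEq hcardEq
      have hd2pos : 1 ≤ S2.card :=
        Finset.card_pos.mpr ⟨⟨u0, hu0v0⟩, Finset.mem_subtype.mpr hu0S⟩
      have count := step_mem T v0 u0 S hadj huniq hv0S k
      rw [if_pos hu0S] at count
      refine ⟨?_, by omega, by omega, by omega⟩
      rw [count, hF']
      have e1 : n + S.card - 1 - degSum T S = n - 1 + S2.card - 1 - degSum T2 S2 := by omega
      have e2 : degSum T S - intEdges T S = (degSum T2 S2 - intEdges T2 S2) + 1 := by omega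
      have e3 : intEdges T S = intEdges T2 S2 + 1 := by omega
      rw [e1, e2, e3, pow_succ, pow_succ]
      have e4 : k - 2 - 1 = k - 3 := by omega
      rw [e4]
      ring
    · -- v0 ∈ S, u0 ∉ S
      simp only [if_pos hv0S, if_neg hu0S,
        if_neg (show ¬(v0 ∈ S ∧ u0 ∈ S) from fun h => hu0S h.2)] at hdegEq hintEq hcardEq
      have hdpos : 1 ≤ S.card := Finset.card_pos.mpr ⟨v0, hv0S⟩
      have count := step_mem T v0 u0 S hadj huniq hv0S k
      rw [if_neg hu0S] at count
      refine ⟨?_, by omega, by omega, by omega⟩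
      rw [count, hF']
      have e1 : n + S.card - 1 - degSum T S = (n - 1 + S2.card - 1 - degSum T2 S2) + 1 := by
        omega
      have e2 : degSum T S - intEdges T S = (degSum T2 S2 - intEdges T2 S2) + 1 := by omega
      have e3 : intEdges T S = intEdges T2 S2 := by omega
      rw [e1, e2, e3, pow_succ, pow_succ]
      have e4 : k - 1 - 1 = k - 2 := by omega
      rw [e4]
      ring
    · -- v0 ∉ S, u0 ∈ S
      simp only [if_neg hv0S, if_pos hu0S,
        if_neg (show ¬(v0 ∈ S ∧ u0 ∈ S) from fun h => hv0S h.1)] at hdegEq hintEq hcardEq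
      have count := step_notMem T v0 u0 S hadj huniq hv0S k
      rw [if_pos hu0S] at count
      refine ⟨?_, by omega, by omega, by omega⟩
      rw [count, hF']
      have e1 : n + S.card - 1 - degSum T S = n - 1 + S2.card - 1 - degSum T2 S2 := by omega
      have e2 : degSum T S - intEdges T S = (degSum T2 S2 - intEdges T2 S2) + 1 := by omega
      have e3 : intEdges T S = intEdges T2 S2 := by omega
      rw [e1, e2, e3, pow_succ]
      ring
    · -- v0 ∉ S, u0 ∉ S
      simp only [if_neg hv0S, if_neg hu0S,
        if_neg (show ¬(v0 ∈ S ∧ u0 ∈ S) from fun h => hv0S h.1)] at hdegEq hintEq hcardEq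
      have count := step_notMem T v0 u0 S hadj huniq hv0S k
      rw [if_neg hu0S] at count
      refine ⟨?_, by omega, by omega, by omega⟩
      rw [count, hF']
      have e1 : n + S.card - 1 - degSum T S = (n - 1 + S2.card - 1 - degSum T2 S2) + 1 := by
        omega
      have e2 : degSum T S - intEdges T S = degSum T2 S2 - intEdges T2 S2 := by omega
      have e3 : intEdges T S = intEdges T2 S2 := by omega
      rw [e1, e2, e3, pow_succ]
      ring

/-- For a tree `T` on `n` vertices and `S ⊆ V(T)` with `|S| = d`, the shadow graph `T_S`
has exactly `k·(k-1)^{n+d-1-deg(S)}·(k-2)^{deg(S)-int(S)}·(k-3)^{int(S)}` proper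
`k`-colorings. -/
theorem tree_multi_shadow_chromatic {V : Type} [Fintype V] (T : SimpleGraph V)
    (hT : T.IsTree) (n : ℕ) (hn : Fintype.card V = n)
    (S : Finset V) (d : ℕ) (hd : S.card = d) (k : ℕ) :
    numColorings (multiShadow T S) k =
      k * (k - 1) ^ (n + d - 1 - degSum T S) *
        (k - 2) ^ (degSum T S - intEdges T S) * (k - 3) ^ (intEdges T S) := by
  subst hn
  subst hd
  exact (main_aux (Fintype.card V) V ‹_› T hT rfl S k).1
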